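/- Let Γ be a finite abstract simplicial complex, 1 ≤ k, and let C_k be a set of k-faces that is down-connected (any two faces joined by a chain of faces in C_k intersecting in (k−1)-faces) and maximal with this property. Suppose C_k admits a coherent orientation: an assignment of an orientation to each face in C_k such that any two oriented faces σ, σ' in C_k sharing a (k−1)-face ρ induce the same orientation on ρ (i.e. [σ:ρ] = [σ':ρ]). Then no face of C_k is contained in a (k+1)-face of Γ; every face in C_k is a facet. -/

import Mathlib

/-- The incidence sign `[σ : ρ]` for a codimension-1 subface `ρ ⊂ σ` of a
canonically (increasingly) ordered face: `(-1)` to the power the position of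
the removed vertex. (Computed here as a product over `σ \ ρ`, which for a
codimension-1 subface is a single vertex.) -/
def IncSgn {α : Type*} [LinearOrder α] (σ ρ : Finset α) : ℤ :=
  (-1) ^ (∑ x ∈ σ \ ρ, (σ.filter (· < x)).card)

/-- A set `S` of `k`-faces is down-connected if any two of its members are
joined by a chain of faces in `S` with consecutive faces intersecting in
`(k-1)`-faces. -/
def DownConnected {α : Type*} [DecidableEq α] (k : ℕ) (S : Finset (Finset α)) : Prop :=
  ∀ σ ∈ S, ∀ σ' ∈ S,
    Relation.ReflTransGen (fun a b => a ∈ S ∧ b ∈ S ∧ a ≠ b ∧ (a ∩ b).card = k) σ σ'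

/-- If a maximal down-connected set `C` of `k`-faces (`k ≥ 1`) of a finite
abstract simplicial complex admits a coherent orientation — an assignment
`ε : faces → {±1}` such that any two faces of `C` sharing a `(k−1)`-face `ρ`
induce the same orientation on `ρ` — then no face of `C` is contained in a
`(k+1)`-face of the complex: every face of `C` is a facet. -/
lemma aux_inter_erase {α : Type*} [DecidableEq α] (τ : Finset α) (x y : α) :
    τ.erase x ∩ τ.erase y = (τ.erase x).erase y := by
  ext z; simp only [Finset.mem_inter, Finset.mem_erase]; tauto

lemma aux_incSgn_erase {α : Type*} [LinearOrder α] (τ : Finset α) {x y : α}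
    (hx : x ∈ τ) (hy : y ∈ τ) (hxy : x ≠ y) :
    IncSgn (τ.erase x) ((τ.erase x).erase y)
      = (if x < y then -1 else 1) * (-1 : ℤ) ^ ((τ.filter (· < y)).card) := by
  have hyx : y ∈ τ.erase x := Finset.mem_erase.2 ⟨hxy.symm, hy⟩
  unfold IncSgn
  rw [Finset.sdiff_erase_self hyx, Finset.sum_singleton]
  rcases lt_or_gt_of_ne hxy with h | h
  · have hfe : (τ.erase x).filter (· < y) = (τ.filter (· < y)).erase x := by
      ext z
      simp only [Finset.mem_filter, Finset.mem_erase]; tauto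
    have hxm : x ∈ τ.filter (· < y) := Finset.mem_filter.2 ⟨hx, h⟩
    rw [hfe, Finset.card_erase_of_mem hxm, if_pos h]
    obtain ⟨m, hm⟩ := Nat.exists_eq_add_of_le (Finset.card_pos.2 ⟨x, hxm⟩)
    rw [hm]
    simp [pow_add, pow_succ]
  · have hfe : (τ.erase x).filter (· < y) = τ.filter (· < y) := by
      ext z
      simp only [Finset.mem_filter, Finset.mem_erase]
      constructor
      · tauto
      · rintro ⟨hz, hzy⟩
        exact ⟨⟨fun he => absurd (he ▸ hzy) (not_lt.2 h.le), hz⟩, hzy⟩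
    rw [hfe, if_neg (not_lt.2 h.le), one_mul]

lemma aux_erase_ne {α : Type*} [DecidableEq α] {τ : Finset α} {x y : α}
    (hy : y ∈ τ) (hxy : x ≠ y) : τ.erase x ≠ τ.erase y := by
  intro h
  have : y ∈ τ.erase x := Finset.mem_erase.2 ⟨hxy.symm, hy⟩
  rw [h] at this
  exact (Finset.mem_erase.1 this).1 rfl

theorem stmt10 {α : Type} [LinearOrder α] [Fintype α]
    (K : Finset (Finset α))
    (hKne : ∀ σ ∈ K, σ.Nonempty)
    (hKdc : ∀ σ ∈ K, ∀ τ, τ ⊆ σ → τ.Nonempty → τ ∈ K)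
    (k : ℕ) (hk : 1 ≤ k)
    (C : Finset (Finset α))
    (hCK : ∀ σ ∈ C, σ ∈ K ∧ σ.card = k + 1)
    (hCconn : DownConnected k C)
    (hCmax : ∀ T : Finset (Finset α), C ⊆ T →
      (∀ σ ∈ T, σ ∈ K ∧ σ.card = k + 1) → DownConnected k T → T = C)
    (ε : Finset α → ℤ)
    (hε : ∀ σ ∈ C, ε σ = 1 ∨ ε σ = -1)
    (hcoh : ∀ σ ∈ C, ∀ σ' ∈ C, σ ≠ σ' → (σ ∩ σ').card = k →
      ε σ * IncSgn σ (σ ∩ σ') = ε σ' * IncSgn σ' (σ ∩ σ')) :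
    ∀ σ ∈ C, (∀ τ ∈ K, σ ⊆ τ → τ.card = k + 2 → False) ∧
      (∀ τ ∈ K, σ ⊆ τ → σ = τ) := by
  intro σ hσ
  have hσK := hCK σ hσ
  have main : ∀ τ ∈ K, σ ⊆ τ → τ.card = k + 2 → False := by
    intro τ hτK hστ hτc
    -- σ = τ.erase z for some z ∈ τ
    have hsd : (τ \ σ).card = 1 := by
      rw [Finset.card_sdiff_of_subset hστ, hτc, hσK.2]; omega
    obtain ⟨z, hz⟩ := Finset.card_eq_one.1 hsd
    have hzτ : z ∈ τ := by
      have : z ∈ τ \ σ := hz ▸ Finset.mem_singleton_self z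
      exact (Finset.mem_sdiff.1 this).1
    have hσz : σ = τ.erase z := by
      apply Finset.eq_of_subset_of_card_le
      · intro w hw
        refine Finset.mem_erase.2 ⟨?_, hστ hw⟩
        intro hwz
        have : w ∈ τ \ σ := hz ▸ (hwz ▸ Finset.mem_singleton_self z)
        exact (Finset.mem_sdiff.1 this).2 hw
      · rw [Finset.card_erase_of_mem hzτ, hτc, hσK.2]; omega
    -- T = C ∪ all boundary faces of τ
    set T : Finset (Finset α) := C ∪ τ.image (fun x => τ.erase x) with hT
    have hCT : C ⊆ T := Finset.subset_union_left
    have hTfaces : ∀ ρ ∈ T, ρ ∈ K ∧ ρ.card = k + 1 := by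
      intro ρ hρ
      rcases Finset.mem_union.1 hρ with h | h
      · exact hCK ρ h
      · obtain ⟨x, hxτ, rfl⟩ := Finset.mem_image.1 h
        have hcard : (τ.erase x).card = k + 1 := by
          rw [Finset.card_erase_of_mem hxτ, hτc]; omega
        refine ⟨hKdc τ hτK _ (Finset.erase_subset _ _) ?_, hcard⟩
        rw [← Finset.card_pos, hcard]; omega
    have hsymm : Symmetric (fun a b : Finset α =>
        a ∈ T ∧ b ∈ T ∧ a ≠ b ∧ (a ∩ b).card = k) := by
      intro a b ⟨h1, h2, h3, h4⟩
      exact ⟨h2, h1, h3.symm, by rwa [Finset.inter_comm]⟩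
    have htoσ : ∀ a ∈ T, Relation.ReflTransGen (fun a b : Finset α =>
        a ∈ T ∧ b ∈ T ∧ a ≠ b ∧ (a ∩ b).card = k) a σ := by
      intro a ha
      rcases Finset.mem_union.1 ha with h | h
      · exact Relation.ReflTransGen.mono (fun p q ⟨h1, h2, h3, h4⟩ => ⟨hCT h1, hCT h2, h3, h4⟩) _ _ (hCconn a h σ hσ)
      · obtain ⟨x, hxτ, rfl⟩ := Finset.mem_image.1 h
        by_cases hxz : x = z
        · rw [hxz, ← hσz]
        · refine Relation.ReflTransGen.single ⟨ha, hCT hσ, ?_, ?_⟩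
          · rw [hσz]; exact aux_erase_ne hzτ hxz
          · rw [hσz, aux_inter_erase, Finset.card_erase_of_mem
              (Finset.mem_erase.2 ⟨fun h => hxz h.symm, hzτ⟩),
              Finset.card_erase_of_mem hxτ, hτc]
            omega
    have hTconn : DownConnected k T := by
      intro a ha b hb
      exact (htoσ a ha).trans (by
        haveI : Std.Symm (fun a b : Finset α =>
            a ∈ T ∧ b ∈ T ∧ a ≠ b ∧ (a ∩ b).card = k) := ⟨fun _ _ h => hsymm h⟩
        exact Std.Symm.symm _ _ (htoσ b hb))
    have hTC : T = C := hCmax T hCT hTfaces hTconn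
    have hmem : ∀ x ∈ τ, τ.erase x ∈ C := by
      intro x hx
      rw [← hTC]
      exact Finset.mem_union_right _ (Finset.mem_image.2 ⟨x, hx, rfl⟩)
    -- the alternating sign function
    set N : α → ℕ := fun x => (τ.filter (· < x)).card with hN
    set f : α → ℤ := fun x => ε (τ.erase x) * (-1) ^ (N x) with hf
    have key : ∀ x ∈ τ, ∀ y ∈ τ, x < y → f x = - f y := by
      intro x hx y hy hlt
      have hxy : x ≠ y := ne_of_lt hlt
      have hic : (τ.erase x ∩ τ.erase y).card = k := by
        rw [aux_inter_erase, Finset.card_erase_of_mem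
          (Finset.mem_erase.2 ⟨fun h => hxy h.symm, hy⟩),
          Finset.card_erase_of_mem hx, hτc]
        omega
      have h := hcoh (τ.erase x) (hmem x hx) (τ.erase y) (hmem y hy)
        (aux_erase_ne hy hxy) hic
      rw [aux_inter_erase] at h
      have hxyint : (τ.erase x).erase y = (τ.erase y).erase x := by
        rw [← aux_inter_erase, Finset.inter_comm, aux_inter_erase]
      rw [aux_incSgn_erase τ hx hy hxy, hxyint,
        aux_incSgn_erase τ hy hx hxy.symm, if_pos hlt,
        if_neg (not_lt.2 hlt.le)] at h
      have hA : ((-1 : ℤ) ^ (N x)) * ((-1) ^ (N x)) = 1 := by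
        rw [← pow_add]; exact Even.neg_one_pow ⟨N x, rfl⟩
      have hB : ((-1 : ℤ) ^ (N y)) * ((-1) ^ (N y)) = 1 := by
        rw [← pow_add]; exact Even.neg_one_pow ⟨N y, rfl⟩
      simp only [hf]
      linear_combination (-(-1 : ℤ) ^ (N x) * (-1) ^ (N y)) * h
        - (ε (τ.erase x) * (-1 : ℤ) ^ (N x)) * hB
        - (ε (τ.erase y) * (-1 : ℤ) ^ (N y)) * hA
    have key' : ∀ x ∈ τ, ∀ y ∈ τ, x ≠ y → f x = - f y := by
      intro x hx y hy hxy
      rcases lt_or_gt_of_ne hxy with h | h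
      · exact key x hx y hy h
      · have := key y hy x hx h
        omega
    -- three distinct elements
    obtain ⟨s, hsτ, hs3⟩ := Finset.exists_subset_card_eq (s := τ) (n := 3) (by omega)
    obtain ⟨a, b, c, hab, hac, hbc, hsabc⟩ := Finset.card_eq_three.1 hs3
    have ha : a ∈ τ := hsτ (hsabc ▸ by simp)
    have hb : b ∈ τ := hsτ (hsabc ▸ by simp)
    have hc : c ∈ τ := hsτ (hsabc ▸ by simp)
    have h1 := key' a ha b hb hab
    have h2 := key' a ha c hc hac
    have h3 := key' b hb c hc hbc
    have hfc : f c * f c = 1 := by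
      simp only [hf]
      rcases hε _ (hmem c hc) with h | h <;>
        · rw [h]
          have : ((-1 : ℤ) ^ (N c)) * ((-1) ^ (N c)) = 1 := by
            rw [← pow_add]; exact Even.neg_one_pow ⟨N c, rfl⟩
          linarith [this]
    have : f c = 0 := by omega
    rw [this] at hfc
    simp at hfc
  refine ⟨main, ?_⟩
  intro τ hτK hστ
  by_contra hne
  obtain ⟨v, hvτ, hvσ⟩ := Finset.exists_of_ssubset (lt_of_le_of_ne hστ hne)
  have hcard : (insert v σ).card = k + 2 := by
    rw [Finset.card_insert_of_notMem hvσ, hσK.2]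
  have hsub : insert v σ ⊆ τ := Finset.insert_subset hvτ hστ
  have hKmem : insert v σ ∈ K := hKdc τ hτK _ hsub (Finset.insert_nonempty _ _)
  exact main _ hKmem (Finset.subset_insert _ _) hcard
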